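/- arXiv:2303.06850 — 2 statements merged into one kernel-verified Lean document; each statement's English description precedes it below -/
import Mathlib

section
/- Let f = Σ_{k∈A} c_k e_k be a trigonometric polynomial (A ⊂ ℤ finite, e_k(x) = e^{2πikx}). Then ‖f‖_{ψ₂} ≤ (Σ|c_k|) / √(log(1 + (Σ|c_k|)²/Σ|c_k|²)). -/
open MeasureTheory Complex
open scoped ComplexConjugate

section aux

lemma exp_convex_aux {t a : ℝ} (ht0 : 0 ≤ t) (ht1 : t ≤ 1) :
    Real.exp (t * a) - 1 ≤ t * (Real.exp a - 1) := by
  have h := convexOn_exp.2 (Set.mem_univ (0:ℝ)) (Set.mem_univ a)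
    (by linarith : (0:ℝ) ≤ 1 - t) ht0 (by ring)
  simp only [smul_eq_mul, mul_zero, zero_add, Real.exp_zero, mul_one] at h
  nlinarith [h]

variable [hfact : Fact (0 < (1:ℝ))]

lemma haar_eq_volume : (volume : Measure (AddCircle (1:ℝ))) = AddCircle.haarAddCircle := by
  rw [AddCircle.volume_eq_smul_haarAddCircle]
  simp

lemma norm_fourier_apply (k : ℤ) (x : AddCircle (1:ℝ)) : ‖fourier k x‖ = 1 := by
  simp [fourier_apply, Circle.norm_coe]

lemma orth_fourier (j k : ℤ) :
    ∫ x : AddCircle (1:ℝ), conj (fourier j x) * fourier k x ∂volume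
      = if j = k then 1 else 0 := by
  have h := orthonormal_iff_ite.mp (orthonormal_fourier (T := 1)) j k
  rw [ContinuousMap.inner_toLp (AddCircle.haarAddCircle) (fourier j) (fourier k)] at h
  rw [haar_eq_volume]
  exact (integral_congr_ae (Filter.Eventually.of_forall fun x => mul_comm _ _)).trans h

lemma integrable_of_continuous {E : Type*} [NormedAddCommGroup E]
    {g : AddCircle (1:ℝ) → E} (hg : Continuous g) :
    Integrable g (volume : Measure (AddCircle (1:ℝ))) := by
  rw [← integrableOn_univ]
  exact hg.continuousOn.integrableOn_compact isCompact_univ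

lemma parseval_finset (A : Finset ℤ) (c : ℤ → ℂ) :
    ∫ x : AddCircle (1:ℝ), ‖∑ k ∈ A, c k * fourier k x‖ ^ 2 ∂volume
      = ∑ k ∈ A, ‖c k‖ ^ 2 := by
  set f : AddCircle (1:ℝ) → ℂ := fun x => ∑ k ∈ A, c k * fourier k x with hf
  have contf : Continuous f := by
    exact continuous_finset_sum _ fun k _ => continuous_const.mul (map_continuous (fourier k))
  have key : ∫ x : AddCircle (1:ℝ), conj (f x) * f x ∂volume
      = ((∑ k ∈ A, ‖c k‖ ^ 2 : ℝ) : ℂ) := by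
    have expand : ∀ x, conj (f x) * f x
        = ∑ j ∈ A, ∑ k ∈ A, (conj (c j) * c k) * (conj (fourier j x) * fourier k x) := by
      intro x
      simp only [hf, map_sum, map_mul, Finset.sum_mul_sum]
      refine Finset.sum_congr rfl fun j _ => Finset.sum_congr rfl fun k _ => by ring
    simp_rw [expand]
    have contterm : ∀ j k : ℤ, Continuous fun x : AddCircle (1:ℝ) =>
        (conj (c j) * c k) * (conj (fourier j x) * fourier k x) := by
      intro j k
      exact continuous_const.mul ((Complex.continuous_conj.comp
        (map_continuous (fourier j))).mul (map_continuous (fourier k)))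
    rw [integral_finset_sum _ (fun j _ => integrable_finset_sum _ (fun k _ =>
      integrable_of_continuous (contterm j k)))]
    have : ∀ j ∈ A, (∫ x : AddCircle (1:ℝ),
        ∑ k ∈ A, (conj (c j) * c k) * (conj (fourier j x) * fourier k x) ∂volume)
        = ((‖c j‖ ^ 2 : ℝ) : ℂ) := by
      intro j hj
      rw [integral_finset_sum _ (fun k _ => integrable_of_continuous (contterm j k))]
      have : ∀ k ∈ A, (∫ x : AddCircle (1:ℝ),
          (conj (c j) * c k) * (conj (fourier j x) * fourier k x) ∂volume)
          = (conj (c j) * c k) * (if j = k then 1 else 0) := by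
        intro k _
        rw [MeasureTheory.integral_const_mul, orth_fourier]
      rw [Finset.sum_congr rfl this]
      simp only [mul_ite, mul_one, mul_zero]
      rw [Finset.sum_ite_eq A j (fun k => conj (c j) * c k)]
      simp [hj, RCLike.conj_mul]
    rw [Finset.sum_congr rfl this]
    push_cast
    rfl
  have coe_eq : ((∫ x : AddCircle (1:ℝ), ‖f x‖ ^ 2 ∂volume : ℝ) : ℂ)
      = ((∑ k ∈ A, ‖c k‖ ^ 2 : ℝ) : ℂ) := by
    calc ((∫ x : AddCircle (1:ℝ), ‖f x‖ ^ 2 ∂volume : ℝ) : ℂ)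
        = ∫ x : AddCircle (1:ℝ), ((‖f x‖ ^ 2 : ℝ) : ℂ) ∂volume := integral_ofReal.symm
      _ = ∫ x : AddCircle (1:ℝ), conj (f x) * f x ∂volume := by
          refine integral_congr_ae (Filter.Eventually.of_forall fun x => ?_)
          simp [Complex.conj_mul']
      _ = _ := key
  exact_mod_cast coe_eq

end aux

open MeasureTheory

/-- The `ψ₂`-Orlicz (Luxemburg) norm for complex-valued functions,
`ψ₂(x) = e^{x²} - 1`. -/
noncomputable def psi2Norm {Ω : Type*} [MeasurableSpace Ω] (μ : Measure Ω)
    (f : Ω → ℂ) : ℝ :=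
  sInf {l : ℝ | 0 < l ∧ ∫ ω, (Real.exp ((‖f ω‖ / l) ^ 2) - 1) ∂μ ≤ 1}

/-- For a trigonometric polynomial `f = Σ_{k∈A} c_k e_k`,
`‖f‖_{ψ₂} ≤ (Σ|c_k|)/√(log(1 + (Σ|c_k|)²/Σ|c_k|²))`. -/
theorem psi2_trig_poly_bound (A : Finset ℤ) (c : ℤ → ℂ) :
    psi2Norm (volume : Measure (AddCircle (1 : ℝ)))
        (fun x => ∑ k ∈ A, c k * fourier k x) ≤
      (∑ k ∈ A, ‖c k‖) /
        Real.sqrt (Real.log (1 + (∑ k ∈ A, ‖c k‖) ^ 2 / ∑ k ∈ A, ‖c k‖ ^ 2)) := by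
  haveI : Fact (0 < (1:ℝ)) := ⟨one_pos⟩
  set f : AddCircle (1:ℝ) → ℂ := fun x => ∑ k ∈ A, c k * fourier k x with hf
  set S := ∑ k ∈ A, ‖c k‖ with hS
  set Q := ∑ k ∈ A, ‖c k‖ ^ 2 with hQ
  have hS0 : 0 ≤ S := Finset.sum_nonneg fun k _ => norm_nonneg _
  have hbdd : BddBelow {l : ℝ | 0 < l ∧
      ∫ ω, (Real.exp ((‖f ω‖ / l) ^ 2) - 1) ∂(volume : Measure (AddCircle (1:ℝ))) ≤ 1} :=
    ⟨0, fun l hl => le_of_lt hl.1⟩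
  rcases eq_or_lt_of_le hS0 with hS0' | hSpos
  · -- degenerate case S = 0
    have hc : ∀ k ∈ A, c k = 0 := by
      intro k hk
      have := (Finset.sum_eq_zero_iff_of_nonneg
        (fun k _ => norm_nonneg (c k))).mp hS0'.symm k hk
      simpa using this
    have hfz : ∀ x, f x = 0 := fun x => Finset.sum_eq_zero fun k hk => by
      rw [hc k hk, zero_mul]
    have hmem : ∀ l : ℝ, 0 < l → psi2Norm (volume : Measure (AddCircle (1:ℝ))) f ≤ l := by
      intro l hl
      unfold psi2Norm
      apply csInf_le hbdd
      refine ⟨hl, ?_⟩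
      simp [hfz]
    have hle0 : psi2Norm (volume : Measure (AddCircle (1:ℝ))) f ≤ 0 := by
      refine le_of_forall_pos_le_add ?_
      intro ε hε
      simpa using hmem ε hε
    exact hle0.trans (div_nonneg hS0 (Real.sqrt_nonneg _))
  · -- main case S > 0
    have hQ0 : 0 ≤ Q := Finset.sum_nonneg fun k _ => sq_nonneg _
    have hQpos : 0 < Q := by
      rcases hQ0.lt_or_eq with h | h
      · exact h
      · exfalso
        have hz : ∀ k ∈ A, ‖c k‖ = 0 := by
          intro k hk
          have := (Finset.sum_eq_zero_iff_of_nonneg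
            (fun k _ => sq_nonneg ‖c k‖)).mp h.symm k hk
          exact pow_eq_zero_iff (n := 2) (by norm_num) |>.mp this
        have : S = 0 := Finset.sum_eq_zero hz
        linarith
    set a := Real.log (1 + S ^ 2 / Q) with ha
    have hapos : 0 < a := by
      apply Real.log_pos
      have : 0 < S ^ 2 / Q := div_pos (by positivity) hQpos
      linarith
    have hsq : 0 < Real.sqrt a := Real.sqrt_pos.mpr hapos
    have hLpos : 0 < S / Real.sqrt a := div_pos hSpos hsq
    set L := S / Real.sqrt a with hL
    have hL2 : L ^ 2 = S ^ 2 / a := by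
      rw [hL, div_pow, Real.sq_sqrt hapos.le]
    have hfb : ∀ x, ‖f x‖ ≤ S := by
      intro x
      refine (norm_sum_le _ _).trans ?_
      refine le_of_eq (Finset.sum_congr rfl fun k _ => ?_)
      rw [norm_mul, norm_fourier_apply, mul_one]
    have hexpa : Real.exp a = 1 + S ^ 2 / Q := Real.exp_log (by positivity)
    have hpt : ∀ x, Real.exp ((‖f x‖ / L) ^ 2) - 1 ≤ ‖f x‖ ^ 2 / Q := by
      intro x
      set t := ‖f x‖ ^ 2 / S ^ 2 with htd
      have ht0 : 0 ≤ t := by positivity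
      have ht1 : t ≤ 1 := by
        rw [div_le_one (by positivity)]
        exact pow_le_pow_left₀ (norm_nonneg _) (hfb x) 2
      have harg : (‖f x‖ / L) ^ 2 = t * a := by
        rw [div_pow, hL2, htd]
        field_simp
      rw [harg]
      have h1 := exp_convex_aux (a := a) ht0 ht1
      have h2 : t * (Real.exp a - 1) = ‖f x‖ ^ 2 / Q := by
        rw [hexpa, htd]
        field_simp
        ring
      linarith
    have contf : Continuous f :=
      continuous_finset_sum _ fun k _ => continuous_const.mul (map_continuous (fourier k))
    have int1 : Integrable (fun x => Real.exp ((‖f x‖ / L) ^ 2) - 1)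
        (volume : Measure (AddCircle (1:ℝ))) := by
      apply integrable_of_continuous
      fun_prop
    have int2 : Integrable (fun x : AddCircle (1:ℝ) => ‖f x‖ ^ 2 / Q)
        (volume : Measure (AddCircle (1:ℝ))) := by
      apply integrable_of_continuous
      fun_prop
    have hineq : ∫ x : AddCircle (1:ℝ), (Real.exp ((‖f x‖ / L) ^ 2) - 1) ∂volume ≤ 1 := by
      have hmono := integral_mono int1 int2 hpt
      have h2 : ∫ x : AddCircle (1:ℝ), ‖f x‖ ^ 2 / Q ∂volume = 1 := by
        rw [integral_div, parseval_finset, ← hQ, div_self hQpos.ne']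
      linarith
    unfold psi2Norm
    exact csInf_le hbdd ⟨hLpos, hineq⟩
end

section
/- Suppose Λ ⊂ ℕ satisfies: there exist C > 0 and α ≥ 1/2 such that ‖f‖_q ≤ C q^α ‖f‖₂ for all q > 2 and all trigonometric polynomials f with Fourier spectrum in Λ. Then for every finite A ⊂ Λ with |A| = n, the ψ₂-norm of the Dirichlet kernel over A satisfies ‖Σ_{j∈A} e_j‖_{ψ₂} ≲ n^{1 − 1/(4α)}. -/
set_option maxHeartbeats 1000000

open MeasureTheory

section Aux

open AddCircle
open scoped ENNReal

lemma psi2_aux_volume_eq : (volume : Measure (AddCircle (1:ℝ))) = haarAddCircle := by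
  rw [volume_eq_smul_haarAddCircle, ENNReal.ofReal_one, one_smul]

lemma psi2_aux_prob : IsProbabilityMeasure (volume : Measure (AddCircle (1:ℝ))) := by
  rw [psi2_aux_volume_eq]; infer_instance

/-- The L² norm of the Dirichlet kernel. -/
lemma psi2_aux_l2 (A : Finset ℤ) :
    (eLpNorm (fun x : AddCircle (1:ℝ) => ∑ k ∈ A, fourier k x) 2 volume).toReal
      = Real.sqrt A.card := by
  have hF : (fun x : AddCircle (1:ℝ) => ∑ k ∈ A, fourier k x)
      = ⇑(∑ k ∈ A, fourier (T := 1) k) := by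
    ext x; simp
  rw [hF, psi2_aux_volume_eq]
  have h1 : ContinuousMap.toLp (E := ℂ) 2 (haarAddCircle (T := 1)) ℂ (∑ k ∈ A, fourier k)
      = ∑ k ∈ A, fourierLp 2 k := by
    rw [map_sum]
  have hnorm : (eLpNorm (⇑(∑ k ∈ A, fourier (T := 1) k)) 2 haarAddCircle).toReal
      = ‖ContinuousMap.toLp (E := ℂ) 2 (haarAddCircle (T := 1)) ℂ (∑ k ∈ A, fourier k)‖ := by
    rw [Lp.norm_def]
    congr 1
    exact eLpNorm_congr_ae (ContinuousMap.coeFn_toLp _ _).symm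
  rw [hnorm, h1]
  have horth := orthonormal_fourier (T := 1)
  have hin : inner (𝕜 := ℂ) (∑ k ∈ A, fourierLp (T := 1) 2 k) (∑ k ∈ A, fourierLp (T := 1) 2 k)
      = (A.card : ℂ) := by
    have := horth.inner_sum (fun _ => (1:ℂ)) (fun _ => (1:ℂ)) A
    simpa using this
  rw [@norm_eq_sqrt_re_inner ℂ, hin]
  simp

lemma psi2_aux_case1 (C α n q : ℝ) (hC : 0 < C) (hα : (1/2:ℝ) ≤ α) (hn : 1 ≤ n) (hq : 2 ≤ q)
    (hcase : q ≤ (Real.sqrt n / C) ^ (1/α)) :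
    C * q ^ α * Real.sqrt n ≤ (C ^ (1/(2*α))) * n ^ (1 - 1/(4*α)) * Real.sqrt q := by
  have hα0 : 0 < α := lt_of_lt_of_le (by norm_num) hα
  have hn0 : (0:ℝ) < n := lt_of_lt_of_le one_pos hn
  have hq0 : (0:ℝ) < q := lt_of_lt_of_le (by norm_num) hq
  have hx0 : 0 < Real.sqrt n / C := div_pos (Real.sqrt_pos.2 hn0) hC
  set x := Real.sqrt n / C with hx
  have h1 : q ^ α = q ^ (α - 1/2) * Real.sqrt q := by
    rw [Real.sqrt_eq_rpow, ← Real.rpow_add hq0]; ring_nf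
  have h2 : q ^ (α - 1/2) ≤ (x ^ (1/α)) ^ (α - 1/2) :=
    Real.rpow_le_rpow hq0.le hcase (by linarith)
  have h3 : (x ^ (1/α)) ^ (α - 1/2) = x ^ ((α - 1/2)/α) := by
    rw [← Real.rpow_mul hx0.le]; ring_nf
  have h23 := h2.trans_eq h3
  have h4 : C * x ^ ((α - 1/2)/α) * Real.sqrt n
      = C ^ (1/(2*α)) * n ^ (1 - 1/(4*α)) := by
    have hβ : (α - 1/2)/α = 1 - 1/(2*α) := by field_simp
    rw [hβ, hx, Real.div_rpow (Real.sqrt_nonneg n) hC.le, Real.sqrt_eq_rpow,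
      ← Real.rpow_mul hn0.le,
      show (1/2) * (1 - 1/(2*α)) = 1/2 - 1/(4*α) by field_simp; ring]
    have en : n ^ (1/2 - 1/(4*α)) * n ^ (1/2:ℝ) = n ^ (1 - 1/(4*α)) := by
      rw [← Real.rpow_add hn0]; ring_nf
    have ec : C ^ (1/(2*α)) * C ^ (1 - 1/(2*α)) = C := by
      rw [← Real.rpow_add hC, show (1/(2*α) + (1 - 1/(2*α))) = 1 by ring, Real.rpow_one]
    have hCb : (0:ℝ) < C ^ (1 - 1/(2*α)) := Real.rpow_pos_of_pos hC _
    rw [mul_div_assoc', div_mul_eq_mul_div, div_eq_iff hCb.ne']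
    linear_combination C * en - (n ^ (1 - 1/(4*α))) * ec
  calc C * q ^ α * Real.sqrt n
      = C * q ^ (α - 1/2) * Real.sqrt n * Real.sqrt q := by rw [h1]; ring
    _ ≤ C * x ^ ((α - 1/2)/α) * Real.sqrt n * Real.sqrt q := by gcongr
    _ = C ^ (1/(2*α)) * n ^ (1 - 1/(4*α)) * Real.sqrt q := by rw [h4]

lemma psi2_aux_case2 (C α n q : ℝ) (hC : 0 < C) (hα : (1/2:ℝ) ≤ α) (hn : 1 ≤ n) (hq : 2 ≤ q)
    (hcase : (Real.sqrt n / C) ^ (1/α) ≤ q) :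
    n ≤ (C ^ (1/(2*α))) * n ^ (1 - 1/(4*α)) * Real.sqrt q := by
  have hα0 : 0 < α := lt_of_lt_of_le (by norm_num) hα
  have hn0 : (0:ℝ) < n := lt_of_lt_of_le one_pos hn
  have hq0 : (0:ℝ) < q := lt_of_lt_of_le (by norm_num) hq
  have hx0 : 0 < Real.sqrt n / C := div_pos (Real.sqrt_pos.2 hn0) hC
  have h1 : ((Real.sqrt n / C) ^ (1/α)) ^ (1/2:ℝ) ≤ q ^ (1/2:ℝ) :=
    Real.rpow_le_rpow (Real.rpow_nonneg hx0.le _) hcase (by norm_num)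
  have h2a : ((Real.sqrt n / C) ^ (1/α)) ^ (1/2:ℝ) = (Real.sqrt n / C) ^ (1/(2*α)) := by
    rw [← Real.rpow_mul hx0.le]; ring_nf
  have h2b : (Real.sqrt n / C) ^ (1/(2*α))
      = n ^ (1/(4*α)) / C ^ (1/(2*α)) := by
    rw [Real.div_rpow (Real.sqrt_nonneg n) hC.le, Real.sqrt_eq_rpow,
      ← Real.rpow_mul hn0.le,
      show (1/2) * (1/(2*α)) = 1/(4*α) by field_simp; ring]
  rw [h2a, h2b, ← Real.sqrt_eq_rpow] at h1
  have hCp : 0 < C ^ (1/(2*α)) := Real.rpow_pos_of_pos hC _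
  have h4 : n ^ (1/(4*α)) ≤ C ^ (1/(2*α)) * Real.sqrt q := by
    rw [div_le_iff₀ hCp] at h1; linarith
  have h5 : n = n ^ (1/(4*α)) * n ^ (1 - 1/(4*α)) := by
    rw [← Real.rpow_add hn0]; norm_num
  calc n = n ^ (1/(4*α)) * n ^ (1 - 1/(4*α)) := h5
    _ ≤ (C ^ (1/(2*α)) * Real.sqrt q) * n ^ (1 - 1/(4*α)) :=
        mul_le_mul_of_nonneg_right h4 (Real.rpow_nonneg hn0.le _)
    _ = C ^ (1/(2*α)) * n ^ (1 - 1/(4*α)) * Real.sqrt q := by ring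

lemma psi2_aux_exp (y : ℝ) :
    Real.exp y - 1 = ∑' n : ℕ, y ^ (n+1) / (n+1).factorial := by
  have hs : Summable (fun n : ℕ => y ^ n / n.factorial) := NormedSpace.expSeries_div_summable y
  rw [Real.exp_eq_exp_ℝ, NormedSpace.exp_eq_tsum_div]
  rw [show (fun x : ℝ => ∑' n : ℕ, x ^ n / n.factorial) y
      = ∑' n : ℕ, y ^ n / n.factorial from rfl, Summable.tsum_eq_zero_add hs]
  simp

lemma psi2_aux_fact (k : ℕ) : (k : ℝ) ^ k ≤ k.factorial * Real.exp k := by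
  have hs : Summable (fun n : ℕ => (k:ℝ) ^ n / n.factorial) :=
    NormedSpace.expSeries_div_summable (k:ℝ)
  have hle : (k:ℝ) ^ k / k.factorial ≤ Real.exp k := by
    rw [Real.exp_eq_exp_ℝ, NormedSpace.exp_eq_tsum_div]
    exact Summable.le_tsum hs k (fun j _ => by positivity)
  have hfac : (0:ℝ) < k.factorial := by positivity
  calc (k:ℝ)^k = ((k:ℝ)^k / k.factorial) * k.factorial := by field_simp
  _ ≤ Real.exp k * k.factorial := mul_le_mul_of_nonneg_right hle hfac.le
  _ = k.factorial * Real.exp k := by ring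

lemma psi2_aux_memLp {Ω E : Type*} [MeasurableSpace Ω] {μ : Measure Ω} [IsFiniteMeasure μ]
    [NormedAddCommGroup E] {f : Ω → E} (hf : AEStronglyMeasurable f μ)
    {B : ℝ} (hB : ∀ x, ‖f x‖ ≤ B) (p : ℝ≥0∞) : MemLp f p μ := by
  refine ⟨hf, lt_of_le_of_lt (eLpNorm_le_of_ae_bound (ae_of_all μ hB)) ?_⟩
  exact ENNReal.mul_lt_top
    (ENNReal.rpow_lt_top_of_nonneg (inv_nonneg.2 ENNReal.toReal_nonneg) (measure_ne_top μ _))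
    ENNReal.ofReal_lt_top

lemma psi2_aux_toReal_le {Ω E : Type*} [MeasurableSpace Ω] {μ : Measure Ω}
    [IsProbabilityMeasure μ] [NormedAddCommGroup E] {f : Ω → E}
    {B : ℝ} (hB0 : 0 ≤ B) (hB : ∀ x, ‖f x‖ ≤ B) (p : ℝ≥0∞) :
    (eLpNorm f p μ).toReal ≤ B := by
  have := eLpNorm_le_of_ae_bound (μ := μ) (p := p) (ae_of_all μ hB)
  rw [measure_univ, ENNReal.one_rpow, one_mul] at this
  exact le_trans (ENNReal.toReal_mono ENNReal.ofReal_ne_top this)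
    (by simp [ENNReal.toReal_ofReal hB0])

lemma psi2_aux_moment {Ω : Type*} [MeasurableSpace Ω] {μ : Measure Ω} [IsProbabilityMeasure μ]
    (f : Ω → ℂ) (k : ℕ) (hk : 0 < k) (hm : MemLp f (ENNReal.ofReal (k:ℝ)) μ) :
    ∫ x, ‖f x‖ ^ k ∂μ = ((eLpNorm f (ENNReal.ofReal (k:ℝ)) μ).toReal) ^ k := by
  have hk0 : (0:ℝ) < (k:ℝ) := by exact_mod_cast hk
  have h1 := hm.eLpNorm_eq_integral_rpow_norm
    (by simp [ENNReal.ofReal_eq_zero, not_le, hk0, hk.ne']) ENNReal.ofReal_ne_top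
  have htr : (ENNReal.ofReal (k:ℝ)).toReal = (k:ℝ) := ENNReal.toReal_ofReal hk0.le
  rw [htr] at h1
  have hint : ∫ x, ‖f x‖ ^ k ∂μ = ∫ x, ‖f x‖ ^ (k:ℝ) ∂μ := by
    congr 1; ext x; rw [Real.rpow_natCast]
  have hnn : 0 ≤ ∫ x, ‖f x‖ ^ (k:ℝ) ∂μ :=
    integral_nonneg fun x => Real.rpow_nonneg (norm_nonneg _) _
  rw [h1, ENNReal.toReal_ofReal (Real.rpow_nonneg hnn _), hint]
  rw [← Real.rpow_natCast ((∫ x, ‖f x‖ ^ (k:ℝ) ∂μ) ^ (k:ℝ)⁻¹) k, ← Real.rpow_mul hnn,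
    inv_mul_cancel₀ hk0.ne', Real.rpow_one]

lemma psi2_aux_geom (M : ℝ) (hM : 0 < M) (k : ℕ) :
    (M * Real.sqrt (2*k)) ^ (2*k) / ((2*Real.sqrt (Real.exp 1)*M) ^ (2*k) * k.factorial)
      ≤ (1/2:ℝ) ^ k := by
  have he1 : (0:ℝ) < Real.exp 1 := Real.exp_pos 1
  have e1 : (M * Real.sqrt (2*k)) ^ (2*k) = M ^ (2*k) * (2*(k:ℝ)) ^ k := by
    rw [mul_pow, pow_mul (Real.sqrt (2*k)) 2 k, Real.sq_sqrt (by positivity : (0:ℝ) ≤ 2*k)]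
  have e2 : (2*Real.sqrt (Real.exp 1)*M) ^ (2*k)
      = (4 * Real.exp 1) ^ k * M ^ (2*k) := by
    rw [pow_mul, show (2*Real.sqrt (Real.exp 1)*M)^2
        = (4 * Real.exp 1) * M^2 by
      have := Real.sq_sqrt he1.le
      nlinarith [this], mul_pow, ← pow_mul]
  have hMk : (0:ℝ) < M ^ (2*k) := by positivity
  have hfac : (0:ℝ) < k.factorial := by positivity
  rw [e1, e2, div_le_iff₀ (by positivity)]
  have key : (2*(k:ℝ)) ^ k ≤ (2:ℝ)^k * (k.factorial * Real.exp k) := by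
    rw [mul_pow]
    exact mul_le_mul_of_nonneg_left (psi2_aux_fact k) (by positivity)
  have hexp : Real.exp (k:ℝ) = (Real.exp 1) ^ k := by
    rw [← Real.exp_nat_mul]; norm_num
  calc M ^ (2*k) * (2*(k:ℝ)) ^ k
      ≤ M ^ (2*k) * ((2:ℝ)^k * (k.factorial * (Real.exp 1) ^ k)) := by
        rw [← hexp]; exact mul_le_mul_of_nonneg_left key hMk.le
    _ = (1/2:ℝ)^k * ((4 * Real.exp 1) ^ k * M ^ (2*k) * k.factorial) := by
        have h4 : ((4:ℝ))^k = (2:ℝ)^k * (2:ℝ)^k := by rw [← mul_pow]; norm_num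
        have h2 : ((2:ℝ))^k ≠ 0 := by positivity
        rw [mul_pow, div_pow, one_pow, h4]
        field_simp

end Aux

/-- If `Λ` satisfies `‖f‖_q ≤ C q^α ‖f‖₂` for all `q > 2` and all polynomials with
spectrum in `Λ`, then for every finite `A ⊆ Λ` with `|A| = n`, the Dirichlet kernel
over `A` satisfies `‖Σ_{j∈A} e_j‖_{ψ₂} ≲ n^{1 - 1/(4α)}`. -/
theorem psi2_dirichlet_kernel_bound (Λ : Set ℤ) (C α : ℝ) (hC : 0 < C)
    (hα : (1 / 2 : ℝ) ≤ α)
    (h : ∀ q : ℝ, 2 < q → ∀ A : Finset ℤ, ↑A ⊆ Λ → ∀ c : ℤ → ℂ,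
      (eLpNorm (fun x : AddCircle (1 : ℝ) => ∑ k ∈ A, c k * fourier k x)
          (ENNReal.ofReal q) volume).toReal ≤
        C * q ^ α *
          (eLpNorm (fun x : AddCircle (1 : ℝ) => ∑ k ∈ A, c k * fourier k x)
            2 volume).toReal) :
    ∃ D : ℝ, 0 < D ∧ ∀ A : Finset ℤ, ↑A ⊆ Λ →
      psi2Norm (volume : Measure (AddCircle (1 : ℝ)))
          (fun x => ∑ k ∈ A, fourier k x) ≤
        D * (A.card : ℝ) ^ (1 - 1 / (4 * α)) := by
  classical
  haveI : IsProbabilityMeasure (volume : Measure (AddCircle (1:ℝ))) := psi2_aux_prob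
  have hα0 : 0 < α := lt_of_lt_of_le (by norm_num) hα
  have he2 : (1/2:ℝ) ≤ 1 - 1/(4*α) := by
    have h42 : (2:ℝ) ≤ 4*α := by linarith
    have : 1/(4*α) ≤ 1/2 := one_div_le_one_div_of_le (by norm_num) h42
    linarith
  have he0 : (0:ℝ) < 1 - 1/(4*α) := lt_of_lt_of_le (by norm_num) he2
  set B : ℝ := max 1 (C ^ (1/(2*α))) with hB
  have hB1 : (1:ℝ) ≤ B := le_max_left _ _
  have hBC : C ^ (1/(2*α)) ≤ B := le_max_right _ _
  have hsqe : (0:ℝ) < Real.sqrt (Real.exp 1) := Real.sqrt_pos.2 (Real.exp_pos 1)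
  refine ⟨2 * Real.sqrt (Real.exp 1) * B, by positivity, ?_⟩
  intro A hA
  rcases Nat.eq_zero_or_pos A.card with hcard0 | hcardpos
  · -- empty case
    rw [Finset.card_eq_zero] at hcard0
    subst hcard0
    simp only [Finset.card_empty, Nat.cast_zero, Finset.sum_empty]
    rw [Real.zero_rpow he0.ne', mul_zero]
    unfold psi2Norm
    have hset : {l : ℝ | 0 < l ∧ ∫ ω : AddCircle (1:ℝ),
        (Real.exp ((‖(0:ℂ)‖ / l) ^ 2) - 1) ∂volume ≤ 1} = Set.Ioi 0 := by
      ext l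
      simp [Set.mem_Ioi]
    rw [hset, csInf_Ioi]
  · -- main case
    have hn1 : (1:ℝ) ≤ (A.card : ℝ) := by exact_mod_cast hcardpos
    set n : ℝ := (A.card : ℝ) with hn
    set f : AddCircle (1:ℝ) → ℂ := fun x => ∑ k ∈ A, fourier k x with hf
    have hfc : Continuous f := continuous_finset_sum _ fun k _ => (fourier k).continuous
    have hbd : ∀ x, ‖f x‖ ≤ n := by
      intro x
      calc ‖f x‖ ≤ ∑ k ∈ A, ‖fourier k x‖ := norm_sum_le _ _
        _ = ∑ _k ∈ A, (1:ℝ) := by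
            refine Finset.sum_congr rfl fun k _ => ?_
            simp [fourier_apply, Circle.norm_coe]
        _ = n := by simp [hn]
    have hmem : ∀ p : ENNReal, MemLp f p volume :=
      fun p => psi2_aux_memLp hfc.aestronglyMeasurable hbd p
    set s : ℝ := n ^ (1 - 1/(4*α)) with hs
    have hs1 : (1:ℝ) ≤ s := by
      calc (1:ℝ) = n ^ (0:ℝ) := (Real.rpow_zero n).symm
        _ ≤ n ^ (1 - 1/(4*α)) := Real.rpow_le_rpow_of_exponent_le hn1 he0.le
    set M : ℝ := B * s with hM
    have hM1 : (1:ℝ) ≤ M := by nlinarith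
    have hM0 : (0:ℝ) < M := lt_of_lt_of_le one_pos hM1
    have hCles : C ^ (1/(2*α)) * n ^ (1 - 1/(4*α)) ≤ M := by
      rw [hM, hs]
      exact mul_le_mul_of_nonneg_right hBC (Real.rpow_nonneg (by linarith) _)
    -- moment bounds
    have claim : ∀ m : ℕ, 1 ≤ m →
        (eLpNorm f (ENNReal.ofReal (2*(m:ℝ))) volume).toReal ≤ M * Real.sqrt (2*(m:ℝ)) := by
      intro m hm
      have hmR : (1:ℝ) ≤ (m:ℝ) := by exact_mod_cast hm
      have hsq2 : (1:ℝ) ≤ Real.sqrt (2*(m:ℝ)) := by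
        rw [show (1:ℝ) = Real.sqrt 1 by simp]
        exact Real.sqrt_le_sqrt (by linarith)
      have hsqn : Real.sqrt n ≤ s := by
        rw [Real.sqrt_eq_rpow, hs]
        exact Real.rpow_le_rpow_of_exponent_le hn1 he2
      rcases eq_or_lt_of_le hm with hm1 | hm2
      · -- m = 1
        rw [← hm1]
        rw [show (2*((1:ℕ):ℝ)) = (2:ℝ) by norm_num]
        rw [show ENNReal.ofReal (2:ℝ) = (2:ENNReal) by norm_num]
        rw [hf, psi2_aux_l2 A, ← hn]
        have h12 : (1:ℝ) ≤ Real.sqrt 2 := by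
          rw [show (1:ℝ) = Real.sqrt 1 by simp]
          exact Real.sqrt_le_sqrt (by norm_num)
        nlinarith [Real.sqrt_nonneg n, hsqn, hs1, hB1, h12]
      · -- m ≥ 2
        have hq2 : (2:ℝ) < 2*(m:ℝ) := by
          have : (2:ℝ) ≤ (m:ℝ) := by exact_mod_cast hm2
          linarith
      
        have happ := h (2*(m:ℝ)) hq2 A hA (fun _ => 1)
        simp only [one_mul] at happ
        rw [psi2_aux_l2 A, ← hf, ← hn] at happ
        rcases le_total (2*(m:ℝ)) ((Real.sqrt n / C) ^ (1/α)) with hc | hc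
        · refine le_trans happ (le_trans
            (psi2_aux_case1 C α n (2*(m:ℝ)) hC hα hn1 hq2.le hc) ?_)
          exact mul_le_mul_of_nonneg_right hCles (Real.sqrt_nonneg _)
        · have hNn : (eLpNorm f (ENNReal.ofReal (2*(m:ℝ))) volume).toReal ≤ n :=
            psi2_aux_toReal_le (by linarith) hbd _
          refine le_trans hNn (le_trans
            (psi2_aux_case2 C α n (2*(m:ℝ)) hC hα hn1 hq2.le hc) ?_)
          exact mul_le_mul_of_nonneg_right hCles (Real.sqrt_nonneg _)
    -- the candidate Luxemburg constant
    set l : ℝ := 2 * Real.sqrt (Real.exp 1) * M with hl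
    have hl0 : 0 < l := by positivity
    set F : ℕ → AddCircle (1:ℝ) → ℝ :=
      fun m x => (‖f x‖ / l) ^ (2*(m+1)) / ((m+1).factorial : ℝ) with hF
    have hFnonneg : ∀ m x, 0 ≤ F m x := fun m x => by positivity
    have hFcont : ∀ m, Continuous (F m) :=
      fun m => (((hfc.norm).div_const l).pow _).div_const _
    have hFle : ∀ m x, F m x ≤ ((n/l) ^ (2*(m+1)) / ((m+1).factorial : ℝ)) := by
      intro m x
      show (‖f x‖ / l) ^ (2*(m+1)) / ((m+1).factorial : ℝ)
        ≤ (n/l) ^ (2*(m+1)) / ((m+1).factorial : ℝ)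
      gcongr
      exact hbd x
    have hFint : ∀ m, Integrable (F m) volume := by
      intro m
      have hb : ∀ x, ‖F m x‖ ≤ ((n/l) ^ (2*(m+1)) / ((m+1).factorial : ℝ)) := fun x => by
        rw [Real.norm_of_nonneg (hFnonneg m x)]; exact hFle m x
      exact memLp_one_iff_integrable.mp
        (psi2_aux_memLp (hFcont m).aestronglyMeasurable hb 1)
    have hmom : ∀ m : ℕ, ∫ x, ‖f x‖ ^ (2*(m+1)) ∂(volume : Measure (AddCircle (1:ℝ)))
        ≤ (M * Real.sqrt (2*((m+1:ℕ):ℝ))) ^ (2*(m+1)) := by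
      intro m
      have hcast : ((2*(m+1) : ℕ) : ℝ) = 2*((m+1:ℕ):ℝ) := by push_cast; ring
      rw [psi2_aux_moment f (2*(m+1)) (by omega) (hmem _)]
      apply pow_le_pow_left₀ ENNReal.toReal_nonneg
      rw [hcast]
      exact claim (m+1) (by omega)
    have hFbound : ∀ m, ∫ x, F m x ∂(volume : Measure (AddCircle (1:ℝ))) ≤ (1/2:ℝ)^(m+1) := by
      intro m
      have hfacpos : (0:ℝ) < ((m+1).factorial : ℝ) := by positivity
      have hint : ∫ x, F m x ∂(volume : Measure (AddCircle (1:ℝ)))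
          = (∫ x, ‖f x‖ ^ (2*(m+1)) ∂(volume : Measure (AddCircle (1:ℝ))))
            / (l ^ (2*(m+1)) * ((m+1).factorial : ℝ)) := by
        have hptF : ∀ x : AddCircle (1:ℝ), F m x
            = ‖f x‖ ^ (2*(m+1)) / (l ^ (2*(m+1)) * ((m+1).factorial : ℝ)) := by
          intro x
          show (‖f x‖ / l) ^ (2*(m+1)) / ((m+1).factorial : ℝ) = _
          rw [div_pow, div_div]
        simp only [hptF]
        rw [integral_div]
      rw [hint]
      have hden : (0:ℝ) < l ^ (2*(m+1)) * ((m+1).factorial : ℝ) := by positivity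
      refine le_trans ((div_le_div_iff_of_pos_right hden).mpr (hmom m)) ?_
      have := psi2_aux_geom M hM0 (m+1)
      rw [← hl] at this
      exact this
    have hgeo_sum : Summable (fun m : ℕ => (1/2:ℝ)^(m+1)) := by
      have hg : Summable (fun m : ℕ => (1/2:ℝ)^m) :=
        summable_geometric_of_lt_one (by norm_num) (by norm_num)
      exact (hg.mul_right (1/2)).congr fun m => (pow_succ _ _).symm
    have hnorm_int : ∀ m, ∫ x, ‖F m x‖ ∂(volume : Measure (AddCircle (1:ℝ)))
        = ∫ x, F m x ∂(volume : Measure (AddCircle (1:ℝ))) := by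
      intro m
      refine integral_congr_ae (ae_of_all _ fun x => ?_)
      exact Real.norm_of_nonneg (hFnonneg m x)
    have hsumm : Summable (fun m => ∫ x, ‖F m x‖ ∂(volume : Measure (AddCircle (1:ℝ)))) := by
      refine Summable.of_nonneg_of_le (fun m => integral_nonneg fun x => norm_nonneg _)
        (fun m => ?_) hgeo_sum
      rw [hnorm_int m]
      exact hFbound m
    have hsummF : Summable (fun m => ∫ x, F m x ∂(volume : Measure (AddCircle (1:ℝ)))) :=
      hsumm.congr fun m => hnorm_int m
    have hexch := integral_tsum_of_summable_integral_norm hFint hsumm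
    have hpt : ∀ x : AddCircle (1:ℝ), Real.exp ((‖f x‖ / l)^2) - 1 = ∑' m : ℕ, F m x := by
      intro x
      rw [psi2_aux_exp]
      refine tsum_congr fun m => ?_
      show ((‖f x‖ / l)^2)^(m+1) / (((m+1).factorial : ℕ) : ℝ)
        = (‖f x‖ / l) ^ (2*(m+1)) / (((m+1).factorial : ℕ) : ℝ)
      congr 1
      rw [← pow_mul]
    have hgeo_val : ∑' m : ℕ, (1/2:ℝ)^(m+1) = 1 := by
      have hg := tsum_geometric_of_lt_one (by norm_num : (0:ℝ) ≤ 1/2)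
        (by norm_num : (1/2:ℝ) < 1)
      calc ∑' m : ℕ, (1/2:ℝ)^(m+1) = ∑' m : ℕ, (1/2:ℝ)^m * (1/2) :=
            tsum_congr fun m => pow_succ _ _
        _ = (∑' m : ℕ, (1/2:ℝ)^m) * (1/2) := tsum_mul_right
        _ = 1 := by rw [hg]; norm_num
    have hintle : ∫ x, (Real.exp ((‖f x‖ / l)^2) - 1) ∂(volume : Measure (AddCircle (1:ℝ)))
        ≤ 1 := by
      calc ∫ x, (Real.exp ((‖f x‖ / l)^2) - 1) ∂(volume : Measure (AddCircle (1:ℝ)))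
          = ∫ x, (∑' m : ℕ, F m x) ∂(volume : Measure (AddCircle (1:ℝ))) := by
            refine integral_congr_ae (ae_of_all _ fun x => ?_)
            exact hpt x
        _ = ∑' m, ∫ x, F m x ∂(volume : Measure (AddCircle (1:ℝ))) := hexch.symm
        _ ≤ ∑' m : ℕ, (1/2:ℝ)^(m+1) := Summable.tsum_le_tsum hFbound hsummF hgeo_sum
        _ = 1 := hgeo_val
    have hmemset : l ∈ {t : ℝ | 0 < t ∧
        ∫ ω, (Real.exp ((‖f ω‖ / t) ^ 2) - 1)
          ∂(volume : Measure (AddCircle (1:ℝ))) ≤ 1} := ⟨hl0, hintle⟩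
    have hcsinf := csInf_le ⟨0, fun y hy => hy.1.le⟩ hmemset
    unfold psi2Norm
    refine le_trans hcsinf ?_
    rw [hl, hM]
    exact le_of_eq (by ring)
end
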